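/- arXiv:2010.09146 — 2 statements merged into one kernel-verified Lean document; each statement's English description precedes it below -/
import Mathlib

section
/- Let Γ be a group and let R be a Γ-graded domain, i.e. a nonzero Γ-graded ring such that for homogeneous x, y ∈ R, xy = 0 implies x = 0 or y = 0. Suppose that for every nonzero homogeneous a ∈ R there exist a Γ-graded division ring K_a and a homomorphism of Γ-graded rings φ_a : R → K_a with φ_a(a) ≠ 0. Then there exist a Γ-graded division ring U and an injective homomorphism of Γ-graded rings R → U. -/
set_option maxHeartbeats 1000000
set_option synthInstance.maxHeartbeats 400000


open Matrix

universe u v w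

section GradedDefs

variable {Γ : Type u} [Group Γ] {R : Type v} [Ring R]

/-- `A` is a homogeneous matrix of distribution `(α, β)`:
its `(i,j)` entry lies in `𝒜 (α i * (β j)⁻¹)`. -/
def IsHomog (𝒜 : Γ → AddSubgroup R) {m n : ℕ}
    (A : Matrix (Fin m) (Fin n) R) (α : Fin m → Γ) (β : Fin n → Γ) : Prop :=
  ∀ i j, A i j ∈ 𝒜 (α i * (β j)⁻¹)

/-- `A` is a homogeneous matrix for some distribution. -/
def IsHomogSq (𝒜 : Γ → AddSubgroup R) {m n : ℕ}
    (A : Matrix (Fin m) (Fin n) R) : Prop :=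
  ∃ (α : Fin m → Γ) (β : Fin n → Γ), IsHomog 𝒜 A α β

end GradedDefs

/-- Square matrices over `R` of arbitrary finite size. -/
abbrev SqMat (R : Type v) : Type v := Σ n : ℕ, Matrix (Fin n) (Fin n) R

section GradedDefs

variable {Γ : Type u} [Group Γ] {R : Type v} [Ring R]

/-- Diagonal sum `A ⊕ B` of two (rectangular) matrices. -/
def diagSum {m n m' n' : ℕ} (A : Matrix (Fin m) (Fin n) R)
    (B : Matrix (Fin m') (Fin n') R) : Matrix (Fin (m + m')) (Fin (n + n')) R :=
  Matrix.reindex finSumFinEquiv finSumFinEquiv (Matrix.fromBlocks A 0 0 B)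

/-- Block lower triangular matrix `[[A, 0], [C, B]]`. -/
def lowerBlockSum {n m : ℕ} (A : Matrix (Fin n) (Fin n) R) (B : Matrix (Fin m) (Fin m) R)
    (C : Matrix (Fin m) (Fin n) R) : Matrix (Fin (n + m)) (Fin (n + m)) R :=
  Matrix.reindex finSumFinEquiv finSumFinEquiv (Matrix.fromBlocks A 0 C B)

/-- Block upper triangular matrix `[[A, C], [0, B]]` with rectangular blocks. -/
def upperBlockSum {m n m' n' : ℕ} (A : Matrix (Fin m) (Fin n) R)
    (B : Matrix (Fin m') (Fin n') R) (C : Matrix (Fin m) (Fin n') R) :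
    Matrix (Fin (m + m')) (Fin (n + n')) R :=
  Matrix.reindex finSumFinEquiv finSumFinEquiv (Matrix.fromBlocks A C 0 B)

/-- `C` is the determinantal sum of `A` and `B` with respect to some column or row:
`A` and `B` agree away from that column (row) and the distinguished column (row) of `C`
is the sum of the corresponding columns (rows) of `A` and `B`. -/
def IsDetSum {n : ℕ} (A B C : Matrix (Fin n) (Fin n) R) : Prop :=
  (∃ c : Fin n, (∀ i j, j ≠ c → A i j = B i j) ∧
      ∀ i j, C i j = if j = c then A i j + B i j else A i j) ∨
  (∃ r : Fin n, (∀ i j, i ≠ r → A i j = B i j) ∧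
      ∀ i j, C i j = if i = r then A i j + B i j else A i j)

/-- `C` is the determinantal sum of the homogeneous matrices `A` and `B`
(which have a common distribution). -/
def GrDetSum (𝒜 : Γ → AddSubgroup R) {n : ℕ} (A B C : Matrix (Fin n) (Fin n) R) : Prop :=
  (∃ α β : Fin n → Γ, IsHomog 𝒜 A α β ∧ IsHomog 𝒜 B α β) ∧ IsDetSum A B C

/-- A square homogeneous matrix `A` is gr-full if whenever `A = P * Q` with `P`
homogeneous of distribution `(α, lam)` and `Q` homogeneous of distribution `(lam, β)`
where `lam` has length `r`, then `r ≥ n`. -/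
def IsGrFull (𝒜 : Γ → AddSubgroup R) {n : ℕ} (A : Matrix (Fin n) (Fin n) R) : Prop :=
  ∀ (r : ℕ) (P : Matrix (Fin n) (Fin r) R) (Q : Matrix (Fin r) (Fin n) R)
    (α : Fin n → Γ) (lam : Fin r → Γ) (β : Fin n → Γ),
    IsHomog 𝒜 P α lam → IsHomog 𝒜 Q lam β → A = P * Q → n ≤ r

/-- gr-prime matrix ideal: a set of square homogeneous matrices satisfying (PM1)–(PM6). -/
structure IsGrPrimeMatrixIdeal (𝒜 : Γ → AddSubgroup R) (P : Set (SqMat R)) : Prop where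
  subset_homog : ∀ p ∈ P, IsHomogSq 𝒜 p.2
  pm1 : ∀ {n : ℕ} (A : Matrix (Fin n) (Fin n) R),
    IsHomogSq 𝒜 A → ¬ IsGrFull 𝒜 A → (⟨n, A⟩ : SqMat R) ∈ P
  pm2 : ∀ {n : ℕ} (A B C : Matrix (Fin n) (Fin n) R),
    (⟨n, A⟩ : SqMat R) ∈ P → (⟨n, B⟩ : SqMat R) ∈ P → GrDetSum 𝒜 A B C →
    (⟨n, C⟩ : SqMat R) ∈ P
  pm3 : ∀ {m n : ℕ} (A : Matrix (Fin m) (Fin m) R) (B : Matrix (Fin n) (Fin n) R),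
    (⟨m, A⟩ : SqMat R) ∈ P → IsHomogSq 𝒜 B → (⟨m + n, diagSum A B⟩ : SqMat R) ∈ P
  pm4 : ∀ {m n : ℕ} (A : Matrix (Fin m) (Fin m) R) (B : Matrix (Fin n) (Fin n) R),
    IsHomogSq 𝒜 A → IsHomogSq 𝒜 B → (⟨m + n, diagSum A B⟩ : SqMat R) ∈ P →
    (⟨m, A⟩ : SqMat R) ∈ P ∨ (⟨n, B⟩ : SqMat R) ∈ P
  pm5 : (⟨1, (1 : Matrix (Fin 1) (Fin 1) R)⟩ : SqMat R) ∉ P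
  pm6 : ∀ {n : ℕ} (A : Matrix (Fin n) (Fin n) R) (e f : Equiv.Perm (Fin n)),
    (⟨n, A⟩ : SqMat R) ∈ P → (⟨n, A.submatrix ⇑e ⇑f⟩ : SqMat R) ∈ P

/-- gr-matrix ideal: a set of square homogeneous matrices satisfying (I1)–(I5). -/
structure IsGrMatrixIdeal (𝒜 : Γ → AddSubgroup R) (I : Set (SqMat R)) : Prop where
  subset_homog : ∀ p ∈ I, IsHomogSq 𝒜 p.2
  i1 : ∀ {n : ℕ} (A : Matrix (Fin n) (Fin n) R),
    IsHomogSq 𝒜 A → ¬ IsGrFull 𝒜 A → (⟨n, A⟩ : SqMat R) ∈ I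
  i2 : ∀ {n : ℕ} (A B C : Matrix (Fin n) (Fin n) R),
    (⟨n, A⟩ : SqMat R) ∈ I → (⟨n, B⟩ : SqMat R) ∈ I → GrDetSum 𝒜 A B C →
    (⟨n, C⟩ : SqMat R) ∈ I
  i3 : ∀ {m n : ℕ} (A : Matrix (Fin m) (Fin m) R) (B : Matrix (Fin n) (Fin n) R),
    (⟨m, A⟩ : SqMat R) ∈ I → IsHomogSq 𝒜 B → (⟨m + n, diagSum A B⟩ : SqMat R) ∈ I
  i4 : ∀ {n : ℕ} (A : Matrix (Fin n) (Fin n) R) (e f : Equiv.Perm (Fin n)),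
    (⟨n, A⟩ : SqMat R) ∈ I → (⟨n, A.submatrix ⇑e ⇑f⟩ : SqMat R) ∈ I
  i5 : ∀ {n : ℕ} (A : Matrix (Fin n) (Fin n) R),
    (⟨n + 1, diagSum A (1 : Matrix (Fin 1) (Fin 1) R)⟩ : SqMat R) ∈ I →
    (⟨n, A⟩ : SqMat R) ∈ I

/-- The diagonal sum of `r` copies of `A`. -/
def diagIter {n : ℕ} (A : Matrix (Fin n) (Fin n) R) :
    (r : ℕ) → Matrix (Fin (n * r)) (Fin (n * r)) R
  | 0 => 0
  | r + 1 => diagSum (diagIter A r) A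

/-- Iterated determinantal sums (with arbitrary bracketing) of elements of `W`. -/
inductive IsDetSumOf (𝒜 : Γ → AddSubgroup R) (W : Set (SqMat R)) : SqMat R → Prop
  | base (p : SqMat R) (hp : p ∈ W) : IsDetSumOf 𝒜 W p
  | step {n : ℕ} (A B C : Matrix (Fin n) (Fin n) R)
      (hA : IsDetSumOf 𝒜 W ⟨n, A⟩) (hB : IsDetSumOf 𝒜 W ⟨n, B⟩)
      (h : GrDetSum 𝒜 A B C) : IsDetSumOf 𝒜 W ⟨n, C⟩

/-- The homogeneous rational closure of degree `γ`: entries `(j,i)` of inverses of matrices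
`A^f` with `A ∈ Sig` homogeneous of distribution `(α, β)` and `β j * (α i)⁻¹ = γ`. -/
def RatCl (𝒜 : Γ → AddSubgroup R) {S : Type w} [Ring S] (Sig : Set (SqMat R)) (f : R →+* S)
    (γ : Γ) : Set S :=
  {x | ∃ (n : ℕ) (A : Matrix (Fin n) (Fin n) R) (α β : Fin n → Γ) (i j : Fin n)
        (B : Matrix (Fin n) (Fin n) S),
      (⟨n, A⟩ : SqMat R) ∈ Sig ∧ IsHomog 𝒜 A α β ∧ β j * (α i)⁻¹ = γ ∧
      (A.map ⇑f) * B = 1 ∧ B * (A.map ⇑f) = 1 ∧ B j i = x}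

/-- gr-lower semimultiplicative set of square homogeneous matrices. -/
def IsGrLowerSemimult (𝒜 : Γ → AddSubgroup R) (Sig : Set (SqMat R)) : Prop :=
  ((⟨1, (1 : Matrix (Fin 1) (Fin 1) R)⟩ : SqMat R) ∈ Sig) ∧
  ∀ {n m : ℕ} (A : Matrix (Fin n) (Fin n) R) (B : Matrix (Fin m) (Fin m) R)
    (α β : Fin n → Γ) (α' β' : Fin m → Γ) (C : Matrix (Fin m) (Fin n) R),
    (⟨n, A⟩ : SqMat R) ∈ Sig → (⟨m, B⟩ : SqMat R) ∈ Sig →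
    IsHomog 𝒜 A α β → IsHomog 𝒜 B α' β' → IsHomog 𝒜 C α' β →
    (⟨n + m, lowerBlockSum A B C⟩ : SqMat R) ∈ Sig

end GradedDefs

/-- A homomorphism of `Γ`-graded rings from `(R, 𝒜)` to a `Γ`-graded division ring. -/
structure GrDivRingHom (Γ : Type u) [Group Γ] [DecidableEq Γ] (R : Type v) [Ring R]
    (𝒜 : Γ → AddSubgroup R) where
  K : Type (max u v)
  [ringK : Ring K]
  [nontrivialK : Nontrivial K]
  grading : Γ → AddSubgroup K
  internal : DirectSum.IsInternal grading
  one_mem : (1 : K) ∈ grading 1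
  mul_mem : ∀ {γ δ : Γ} {x y : K}, x ∈ grading γ → y ∈ grading δ → x * y ∈ grading (γ * δ)
  isUnit_of_ne : ∀ {γ : Γ} {x : K}, x ∈ grading γ → x ≠ 0 → IsUnit x
  φ : R →+* K
  map_mem : ∀ {γ : Γ} {r : R}, r ∈ 𝒜 γ → φ r ∈ grading γ

attribute [instance] GrDivRingHom.ringK GrDivRingHom.nontrivialK

open DirectSum

section Helpers
variable {Γ : Type u} [Group Γ] [DecidableEq Γ] {K : Type v} [Ring K]

/-- Directness: a finite sum of homogeneous elements of pairwise distinct degrees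
is zero only if each term is zero. -/
theorem homogSumEqZero (g : Γ → AddSubgroup K) (hint : DirectSum.IsInternal g)
    (s : Finset Γ) (cc : Γ → K) (hmem : ∀ γ ∈ s, cc γ ∈ g γ)
    (hsum : ∑ γ ∈ s, cc γ = 0) : ∀ γ ∈ s, cc γ = 0 := by
  classical
  set x : ⨁ γ, ↥(g γ) :=
    ∑ γ ∈ s.attach, DirectSum.of (fun γ => ↥(g γ)) γ.1 ⟨cc γ.1, hmem γ.1 γ.2⟩ with hx
  have hco : DirectSum.coeAddMonoidHom g x = 0 := by
    rw [hx, _root_.map_sum]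
    simp only [DirectSum.coeAddMonoidHom_of]
    rw [Finset.sum_attach s (fun γ => cc γ)]
    exact hsum
  have hx0 : x = 0 := hint.injective (by rw [hco]; simp)
  intro γ hγ
  have hxγ : x γ = ⟨cc γ, hmem γ hγ⟩ := by
    rw [hx, DFinsupp.finset_sum_apply]
    rw [Finset.sum_eq_single_of_mem (⟨γ, hγ⟩ : {y // y ∈ s}) (Finset.mem_attach s _)]
    · exact DirectSum.of_eq_same _ _
    · intro b _ hb
      exact DirectSum.of_eq_of_ne _ _ _ (fun h => hb (Subtype.ext h.symm))
  have : (⟨cc γ, hmem γ hγ⟩ : g γ) = 0 := by rw [← hxγ, hx0]; rfl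
  exact Subtype.ext_iff.mp this

/-- In a graded ring, the inverse of a homogeneous unit of degree `γ` is homogeneous
of degree `γ⁻¹`. -/
theorem homogInvMem (g : Γ → AddSubgroup K) (hint : DirectSum.IsInternal g)
    (h1 : (1 : K) ∈ g 1)
    (hm : ∀ {γ δ : Γ} {x y : K}, x ∈ g γ → y ∈ g δ → x * y ∈ g (γ * δ))
    {γ : Γ} {x : K} (hx : x ∈ g γ) (hu : IsUnit x) :
    ∃ y : K, y ∈ g γ⁻¹ ∧ x * y = 1 ∧ y * x = 1 := by
  classical
  letI : DecidableEq (Additive Γ) := fun a b =>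
    ‹DecidableEq Γ› (Additive.toMul a) (Additive.toMul b)
  set ℳ : Additive Γ → AddSubgroup K := fun i => g (Additive.toMul i) with hℳ
  have hintℳ : DirectSum.IsInternal ℳ := hint
  letI : SetLike.GradedOne ℳ := ⟨h1⟩
  letI : SetLike.GradedMul ℳ := ⟨fun {i j gi gj} ha hb => hm ha hb⟩
  letI : SetLike.GradedMonoid ℳ := ⟨⟩
  letI : DirectSum.Decomposition ℳ := hintℳ.chooseDecomposition
  letI : GradedRing ℳ := ⟨⟩
  obtain ⟨u, hux⟩ := hu
  have hyx : (↑u⁻¹ : K) * x = 1 := by rw [← hux]; exact u.inv_mul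
  have hxy : x * (↑u⁻¹ : K) = 1 := by rw [← hux]; exact u.mul_inv
  have hxmem : x ∈ ℳ (Additive.ofMul γ) := hx
  have key : (DirectSum.decompose ℳ ((↑u⁻¹ : K) * x)
        (-(Additive.ofMul γ) + Additive.ofMul γ) : K)
      = (DirectSum.decompose ℳ (↑u⁻¹ : K) (-(Additive.ofMul γ)) : K) * x :=
    DirectSum.coe_decompose_mul_add_of_right_mem ℳ hxmem
  rw [hyx, neg_add_cancel,
    DirectSum.decompose_of_mem_same ℳ (show (1:K) ∈ ℳ 0 from h1)] at key
  set z : K := (DirectSum.decompose ℳ (↑u⁻¹ : K) (-(Additive.ofMul γ)) : K) with hz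
  have hzx : z * x = 1 := key.symm
  have hzy : z = (↑u⁻¹ : K) := by
    calc z = z * (x * (↑u⁻¹ : K)) := by rw [hxy, mul_one]
    _ = (z * x) * (↑u⁻¹ : K) := by rw [mul_assoc]
    _ = (↑u⁻¹ : K) := by rw [hzx, one_mul]
  refine ⟨(↑u⁻¹ : K), ?_, hxy, hyx⟩
  have hmem : z ∈ ℳ (-(Additive.ofMul γ)) :=
    (DirectSum.decompose ℳ (↑u⁻¹ : K) (-(Additive.ofMul γ))).2
  rw [hzy] at hmem
  exact hmem

end Helpers


section Construction
variable {Γ : Type u} [Group Γ] [DecidableEq Γ] {R : Type v} [Ring R]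
  {𝒜 : Γ → AddSubgroup R}
  {ι : Type (max u v)} (d : ι → GrDivRingHom Γ R 𝒜) (U : Ultrafilter ι)

/-- The product ring. -/
abbrev BigP : Type (max u v) := ∀ a : ι, (d a).K

/-- The ultrafilter congruence. -/
def conU : RingCon (BigP d) :=
  ⟨⟨⟨fun f g => {a | f a = g a} ∈ U,
    ⟨fun f => by
       have h : {a : ι | f a = f a} = Set.univ := Set.eq_univ_of_forall fun a => rfl
       rw [h]; exact Filter.univ_mem,
     fun h => by simpa [eq_comm] using h,
     fun h1 h2 => by
       filter_upwards [h1, h2] with a ha hb using ha.trans hb⟩⟩,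
    fun h1 h2 => by
      filter_upwards [h1, h2] with a ha hb
      simp only [Pi.mul_apply, ha, hb]⟩,
    fun h1 h2 => by
      filter_upwards [h1, h2] with a ha hb
      simp only [Pi.add_apply, ha, hb]⟩

/-- The ultraproduct-style quotient ring. -/
abbrev QU : Type (max u v) := (conU d U).Quotient

lemma conU_mk_eq {f g : BigP d} :
    ((conU d U).mk' f = (conU d U).mk' g) ↔ {a | f a = g a} ∈ U :=
  (conU d U).eq


/-- The degree-`γ` part of the product ring. -/
def Pg (γ : Γ) : AddSubgroup (BigP d) := AddSubgroup.pi Set.univ fun a => (d a).grading γ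

/-- The degree-`γ` part of the quotient ring. -/
def Bg (γ : Γ) : AddSubgroup (QU d U) :=
  (Pg d γ).map ((conU d U).mk').toAddMonoidHom

lemma mem_Bg {γ : Γ} {x : QU d U} :
    x ∈ Bg d U γ ↔ ∃ f : BigP d, (∀ a, f a ∈ (d a).grading γ) ∧ (conU d U).mk' f = x := by
  constructor
  · rintro ⟨f, hf, rfl⟩
    exact ⟨f, fun a => (AddSubgroup.mem_pi _).mp hf a (Set.mem_univ a), rfl⟩
  · rintro ⟨f, hf, rfl⟩
    exact ⟨f, (AddSubgroup.mem_pi _).mpr fun a _ => hf a, rfl⟩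

lemma one_mem_Bg : (1 : QU d U) ∈ Bg d U 1 :=
  (mem_Bg d U).mpr ⟨1, fun a => (d a).one_mem, _root_.map_one _⟩

lemma mul_mem_Bg {γ δ : Γ} {x y : QU d U} (hx : x ∈ Bg d U γ) (hy : y ∈ Bg d U δ) :
    x * y ∈ Bg d U (γ * δ) := by
  obtain ⟨f, hf, rfl⟩ := (mem_Bg d U).mp hx
  obtain ⟨g, hg, rfl⟩ := (mem_Bg d U).mp hy
  exact (mem_Bg d U).mpr ⟨f * g, fun a => (d a).mul_mem (hf a) (hg a), _root_.map_mul _ f g⟩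

lemma Bg_sum_eq_zero (s : Finset Γ) (cc : Γ → QU d U)
    (hmem : ∀ γ ∈ s, cc γ ∈ Bg d U γ) (hsum : ∑ γ ∈ s, cc γ = 0) :
    ∀ γ ∈ s, cc γ = 0 := by
  classical
  have hrep : ∀ γ : Γ, ∃ f : BigP d,
      (γ ∈ s → ((∀ a, f a ∈ (d a).grading γ) ∧ (conU d U).mk' f = cc γ)) := by
    intro γ
    by_cases hγ : γ ∈ s
    · obtain ⟨f, hf, hf2⟩ := (mem_Bg d U).mp (hmem γ hγ)
      exact ⟨f, fun _ => ⟨hf, hf2⟩⟩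
    · exact ⟨0, fun h => absurd h hγ⟩
  choose F hF using hrep
  have hmk : (conU d U).mk' (∑ γ ∈ s, F γ) = (conU d U).mk' 0 := by
    rw [_root_.map_sum, Finset.sum_congr rfl (fun γ hγ => (hF γ hγ).2), _root_.map_zero]
    exact hsum
  have hset : {a | (∑ γ ∈ s, F γ) a = (0 : BigP d) a} ∈ U := (conU_mk_eq d U).mp hmk
  intro γ hγ
  have hsub : {a | (∑ γ' ∈ s, F γ') a = (0 : BigP d) a} ⊆
      {a | F γ a = (0 : BigP d) a} := by
    intro a ha
    have hz : ∑ γ' ∈ s, F γ' a = 0 := by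
      have h' : (∑ γ' ∈ s, F γ') a = 0 := ha
      rwa [Finset.sum_apply] at h'
    exact homogSumEqZero (d a).grading (d a).internal s (fun γ' => F γ' a)
      (fun γ' hγ' => (hF γ' hγ').1 a) hz γ hγ
  have : {a | F γ a = (0 : BigP d) a} ∈ U := Filter.mem_of_superset hset hsub
  rw [← (hF γ hγ).2,
    show ((conU d U).mk' (F γ) : QU d U) = (conU d U).mk' 0 from (conU_mk_eq d U).mpr this]
  exact _root_.map_zero _

lemma Bg_exists_inv {γ : Γ} {x : QU d U} (hx : x ∈ Bg d U γ) (hx0 : x ≠ 0) :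
    ∃ y : QU d U, y ∈ Bg d U γ⁻¹ ∧ x * y = 1 ∧ y * x = 1 := by
  classical
  obtain ⟨f, hf, rfl⟩ := (mem_Bg d U).mp hx
  have hne : {a | f a ≠ 0} ∈ U := by
    have h0 : ¬ ({a | f a = (0 : BigP d) a} ∈ U) := fun h =>
      hx0 (by rw [show ((conU d U).mk' f : QU d U) = (conU d U).mk' 0
            from (conU_mk_eq d U).mpr h, _root_.map_zero])
    have hc := (Ultrafilter.compl_mem_iff_notMem (s := {a | f a = (0 : BigP d) a})
      (f := U)).mpr h0
    exact hc
  set g : BigP d := fun a =>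
    if h : ∃ y : (d a).K, y ∈ (d a).grading γ⁻¹ ∧ f a * y = 1 ∧ y * f a = 1
    then h.choose else 0 with hgdef
  have hgmem : ∀ a, g a ∈ (d a).grading γ⁻¹ := by
    intro a
    rw [hgdef]
    dsimp only
    split
    next h => exact h.choose_spec.1
    next h => exact zero_mem _
  have hkey : ∀ a ∈ {a | f a ≠ 0}, f a * g a = 1 ∧ g a * f a = 1 := by
    intro a ha
    have hex : ∃ y, y ∈ (d a).grading γ⁻¹ ∧ f a * y = 1 ∧ y * f a = 1 :=
      homogInvMem (d a).grading (d a).internal (d a).one_mem (fun h1 h2 => (d a).mul_mem h1 h2)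
        (hf a) ((d a).isUnit_of_ne (hf a) ha)
    rw [hgdef]
    dsimp only
    rw [dif_pos hex]
    exact ⟨hex.choose_spec.2.1, hex.choose_spec.2.2⟩
  refine ⟨(conU d U).mk' g, (mem_Bg d U).mpr ⟨g, hgmem, rfl⟩, ?_, ?_⟩
  · rw [← _root_.map_mul, show ((conU d U).mk' (f * g) : QU d U) = (conU d U).mk' 1 from
      (conU_mk_eq d U).mpr (Filter.mem_of_superset hne fun a ha => (hkey a ha).1), _root_.map_one]
  · rw [← _root_.map_mul, show ((conU d U).mk' (g * f) : QU d U) = (conU d U).mk' 1 from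
      (conU_mk_eq d U).mpr (Filter.mem_of_superset hne fun a ha => (hkey a ha).2), _root_.map_one]

lemma QU_nontrivial : Nontrivial (QU d U) := by
  refine ⟨(1 : QU d U), 0, fun h => ?_⟩
  have h1 : ((conU d U).mk' (1 : BigP d) : QU d U) = (conU d U).mk' 0 := by
    rw [_root_.map_one, _root_.map_zero]; exact h
  have hmem := (conU_mk_eq d U).mp h1
  have hempty : {a : ι | (1 : BigP d) a = (0 : BigP d) a} = ∅ := by
    ext a
    simpa using one_ne_zero (α := (d a).K)
  rw [hempty] at hmem
  exact Filter.empty_notMem (↑U : Filter ι) hmem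

/-- The homogeneous part of the quotient ring. -/
def TU : AddSubgroup (QU d U) := ⨆ γ : Γ, Bg d U γ

lemma Bg_le_TU (γ : Γ) : Bg d U γ ≤ TU d U := le_iSup (fun γ => Bg d U γ) γ

lemma TU_mul_right {δ : Γ} {y : QU d U} (hy : y ∈ Bg d U δ) {x : QU d U}
    (hx : x ∈ TU d U) : x * y ∈ TU d U := by
  refine AddSubgroup.iSup_induction (C := fun x => x * y ∈ TU d U) _ hx
    (fun γ x' hx' => ?_) ?_ (fun a b ha hb => ?_)
  · exact Bg_le_TU d U (γ * δ) (mul_mem_Bg d U hx' hy)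
  · show (0 : QU d U) * y ∈ TU d U
    rw [zero_mul]; exact zero_mem _
  · show (a + b) * y ∈ TU d U
    rw [add_mul]; exact add_mem ha hb

lemma mul_mem_TU {x y : QU d U} (hx : x ∈ TU d U) (hy : y ∈ TU d U) :
    x * y ∈ TU d U := by
  refine AddSubgroup.iSup_induction (C := fun y => x * y ∈ TU d U) _ hy
    (fun δ y' hy' => TU_mul_right d U hy' hx) ?_ (fun a b ha hb => ?_)
  · show x * (0 : QU d U) ∈ TU d U
    rw [mul_zero]; exact zero_mem _
  · show x * (a + b) ∈ TU d U
    rw [mul_add]; exact add_mem ha hb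

lemma exists_TU_repr {x : QU d U} (hx : x ∈ TU d U) :
    ∃ (s : Finset Γ) (cc : Γ → QU d U), (∀ γ ∈ s, cc γ ∈ Bg d U γ) ∧
      (∀ γ ∉ s, cc γ = 0) ∧ x = ∑ γ ∈ s, cc γ := by
  classical
  refine AddSubgroup.iSup_induction
    (C := fun x => ∃ (s : Finset Γ) (cc : Γ → QU d U), (∀ γ ∈ s, cc γ ∈ Bg d U γ) ∧
      (∀ γ ∉ s, cc γ = 0) ∧ x = ∑ γ ∈ s, cc γ) _ hx
    (fun γ x' hx' => ?_) ?_ (fun a b ha hb => ?_)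
  · refine ⟨{γ}, fun γ' => if γ' = γ then x' else 0, ?_, ?_, ?_⟩
    · intro γ' hγ'
      rcases Finset.mem_singleton.mp hγ' with rfl
      simpa using hx'
    · intro γ' hγ'
      show (if γ' = γ then x' else 0) = 0
      rw [if_neg (fun h => hγ' (Finset.mem_singleton.mpr h))]
    · simp
  · exact ⟨∅, fun _ => 0, by simp, by simp, by simp⟩
  · obtain ⟨s, cc, hmem, hz, rfl⟩ := ha
    obtain ⟨s', cc', hmem', hz', rfl⟩ := hb
    refine ⟨s ∪ s', cc + cc', fun γ hγ => ?_, fun γ hγ => ?_, ?_⟩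
    · have h1 : cc γ ∈ Bg d U γ := by
        by_cases h : γ ∈ s
        · exact hmem γ h
        · rw [hz γ h]; exact zero_mem _
      have h2 : cc' γ ∈ Bg d U γ := by
        by_cases h : γ ∈ s'
        · exact hmem' γ h
        · rw [hz' γ h]; exact zero_mem _
      exact add_mem h1 h2
    · rw [Finset.mem_union, not_or] at hγ
      show cc γ + cc' γ = 0
      rw [hz γ hγ.1, hz' γ hγ.2, add_zero]
    · simp only [Pi.add_apply]
      rw [Finset.sum_add_distrib]
      congr 1
      · exact Finset.sum_subset Finset.subset_union_left (fun γ _ hγ => hz γ hγ)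
      · exact Finset.sum_subset Finset.subset_union_right (fun γ _ hγ => hz' γ hγ)

/-- The homogeneous subring of the quotient ring. -/
def USM : Submonoid (QU d U) where
  carrier := TU d U
  one_mem' := Bg_le_TU d U 1 (one_mem_Bg d U)
  mul_mem' := fun ha hb => mul_mem_TU d U ha hb

def Usubring : Subring (QU d U) := Subring.mk' (TU d U) (USM d U) (TU d U) rfl rfl

lemma mem_Usubring {x : QU d U} : x ∈ Usubring d U ↔ x ∈ TU d U := by
  show x ∈ (TU d U : Set (QU d U)) ↔ x ∈ TU d U
  exact Iff.rfl

/-- The grading on the homogeneous subring. -/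
def gU (γ : Γ) : AddSubgroup ↥(Usubring d U) :=
  (Bg d U γ).addSubgroupOf (Usubring d U).toAddSubgroup

lemma mem_gU {γ : Γ} {x : ↥(Usubring d U)} :
    x ∈ gU d U γ ↔ (x : QU d U) ∈ Bg d U γ :=
  AddSubgroup.mem_addSubgroupOf


theorem exists_homog_repr' {Γ' : Type u} [DecidableEq Γ'] {M : Type*} [AddCommGroup M]
    (g : Γ' → AddSubgroup M) (hint : DirectSum.IsInternal g) (r : M) :
    ∃ (s : Finset Γ') (cc : Γ' → M), (∀ γ ∈ s, cc γ ∈ g γ) ∧ (∀ γ ∈ s, cc γ ≠ 0) ∧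
      r = ∑ γ ∈ s, cc γ := by
  classical
  obtain ⟨x, rfl⟩ := hint.surjective r
  refine ⟨x.support, fun γ => ↑(x γ), fun γ _ => (x γ).2, fun γ hγ h => ?_, ?_⟩
  · exact (DFinsupp.mem_support_iff.mp hγ) (Subtype.ext h)
  · conv_lhs => rw [← DirectSum.sum_support_of x]
    rw [_root_.map_sum]
    simp only [DirectSum.coeAddMonoidHom_of]

lemma Usubring_nontrivial : Nontrivial ↥(Usubring d U) := by
  haveI := QU_nontrivial d U
  refine ⟨1, 0, fun h => ?_⟩
  have h1 : ((1 : ↥(Usubring d U)) : QU d U) = ((0 : ↥(Usubring d U)) : QU d U) :=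
    congrArg Subtype.val h
  rw [OneMemClass.coe_one, ZeroMemClass.coe_zero] at h1
  exact one_ne_zero h1

lemma gU_internal : DirectSum.IsInternal (gU d U) := by
  classical
  constructor
  · rw [injective_iff_map_eq_zero]
    intro x hx
    have hrepr : DirectSum.coeAddMonoidHom (gU d U) x
        = ∑ γ ∈ x.support, ((x γ : ↥(Usubring d U))) := by
      conv_lhs => rw [← DirectSum.sum_support_of x]
      rw [_root_.map_sum]
      simp only [DirectSum.coeAddMonoidHom_of]
    have h0 : ∑ γ ∈ x.support, ((x γ : ↥(Usubring d U))) = 0 := by rw [← hrepr, hx]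
    have hQ : ∑ γ ∈ x.support, ((x γ : ↥(Usubring d U)) : QU d U) = 0 := by
      rw [← AddSubmonoidClass.coe_finset_sum, h0, ZeroMemClass.coe_zero]
    have hz := Bg_sum_eq_zero d U x.support
      (fun γ => ((x γ : ↥(Usubring d U)) : QU d U))
      (fun γ _ => (mem_gU d U).mp (x γ).2) hQ
    refine DFinsupp.ext fun γ => ?_
    by_cases hγ : γ ∈ x.support
    · exact Subtype.ext (Subtype.ext (hz γ hγ))
    · simpa using DFinsupp.notMem_support_iff.mp hγ
  · intro u
    obtain ⟨s, cc, hmem, hz, hsum⟩ := exists_TU_repr d U ((mem_Usubring d U).mp u.2)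
    have h1 : ∀ γ : {γ // γ ∈ s}, cc γ.1 ∈ Usubring d U := fun γ =>
      (mem_Usubring d U).mpr (Bg_le_TU d U γ.1 (hmem γ.1 γ.2))
    set w : ∀ γ : {γ // γ ∈ s}, ↥(gU d U γ.1) := fun γ =>
      ⟨⟨cc γ.1, h1 γ⟩, (mem_gU d U).mpr (hmem γ.1 γ.2)⟩ with hw
    refine ⟨∑ γ ∈ s.attach, DirectSum.of (fun γ => ↥(gU d U γ)) γ.1 (w γ), ?_⟩
    rw [_root_.map_sum]
    simp only [DirectSum.coeAddMonoidHom_of]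
    apply Subtype.ext
    rw [AddSubmonoidClass.coe_finset_sum]
    have h3 : ∀ γ ∈ s.attach, (((w γ : ↥(Usubring d U))) : QU d U) = cc γ.1 :=
      fun γ _ => rfl
    rw [Finset.sum_congr rfl h3, Finset.sum_attach s cc]
    exact hsum.symm

/-- The canonical map into the quotient ring. -/
def phiQ : R →+* QU d U := ((conU d U).mk').comp (Pi.ringHom fun a => (d a).φ)

lemma phiQ_mem {γ : Γ} {r : R} (hr : r ∈ 𝒜 γ) : phiQ d U r ∈ Bg d U γ :=
  (mem_Bg d U).mpr ⟨fun a => (d a).φ r, fun a => (d a).map_mem hr, rfl⟩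

lemma phiQ_mem_Usubring (hint : DirectSum.IsInternal 𝒜) (r : R) :
    phiQ d U r ∈ Usubring d U := by
  obtain ⟨s, cc, hmem, hne, rfl⟩ := exists_homog_repr' 𝒜 hint r
  rw [_root_.map_sum]
  exact (mem_Usubring d U).mpr
    (sum_mem fun γ hγ => Bg_le_TU d U γ (phiQ_mem d U (hmem γ hγ)))

/-- The ultraproduct graded division ring together with the map from `R`. -/
noncomputable def ultraGr (hint : DirectSum.IsInternal 𝒜) : GrDivRingHom Γ R 𝒜 where
  K := ↥(Usubring d U)
  ringK := inferInstance
  nontrivialK := Usubring_nontrivial d U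
  grading := gU d U
  internal := gU_internal d U
  one_mem := (mem_gU d U).mpr (by rw [OneMemClass.coe_one]; exact one_mem_Bg d U)
  mul_mem := fun {γ δ x y} hx hy => (mem_gU d U).mpr (by
    rw [MulMemClass.coe_mul]
    exact mul_mem_Bg d U ((mem_gU d U).mp hx) ((mem_gU d U).mp hy))
  isUnit_of_ne := fun {γ x} hx hx0 => by
    have hxQ : (x : QU d U) ∈ Bg d U γ := (mem_gU d U).mp hx
    have hxQ0 : (x : QU d U) ≠ 0 := fun h => hx0 (Subtype.ext h)
    obtain ⟨y, hymem, hxy, hyx⟩ := Bg_exists_inv d U hxQ hxQ0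
    have hyU : y ∈ Usubring d U := (mem_Usubring d U).mpr (Bg_le_TU d U γ⁻¹ hymem)
    exact ⟨⟨x, ⟨y, hyU⟩, Subtype.ext (by rw [MulMemClass.coe_mul]; exact hxy),
      Subtype.ext (by rw [MulMemClass.coe_mul]; exact hyx)⟩, rfl⟩
  φ := (phiQ d U).codRestrict (Usubring d U) (phiQ_mem_Usubring d U hint)
  map_mem := fun {γ r} hr => (mem_gU d U).mpr (phiQ_mem d U hr)

theorem ultraGr_injective (hint : DirectSum.IsInternal 𝒜)
    (hU : ∀ (γ : Γ) (x : R), x ∈ 𝒜 γ → x ≠ 0 → {a | (d a).φ x ≠ 0} ∈ U) :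
    Function.Injective ⇑(ultraGr d U hint).φ := by
  rw [injective_iff_map_eq_zero]
  intro r hr
  by_contra hr0
  have hQ0 : phiQ d U r = 0 := congrArg Subtype.val hr
  obtain ⟨s, cc, hmem, hne, rfl⟩ := exists_homog_repr' 𝒜 hint r
  have hs : s.Nonempty := by
    rcases Finset.eq_empty_or_nonempty s with rfl | h
    · exact absurd (by simp) hr0
    · exact h
  obtain ⟨γ, hγ⟩ := hs
  have hz := Bg_sum_eq_zero d U s (fun γ => phiQ d U (cc γ))
    (fun γ hγ => phiQ_mem d U (hmem γ hγ)) (by rw [← _root_.map_sum]; exact hQ0) γ hγ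
  have h1 : {a | (d a).φ (cc γ) = (0 : BigP d) a} ∈ U := by
    have heq : ((conU d U).mk' (fun a => (d a).φ (cc γ)) : QU d U) = (conU d U).mk' 0 := by
      rw [_root_.map_zero]; exact hz
    exact (conU_mk_eq d U).mp heq
  have h2 := hU γ (cc γ) (hmem γ hγ) (hne γ hγ)
  have h3 := Filter.inter_mem h1 h2
  have hempty : ({a | (d a).φ (cc γ) = (0 : BigP d) a} ∩ {a | (d a).φ (cc γ) ≠ 0}) = ∅ :=
    Set.eq_empty_iff_forall_notMem.mpr fun a ha => ha.2 ha.1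
  rw [hempty] at h3
  exact Filter.empty_notMem (↑U : Filter ι) h3

end Construction


theorem exists_injective_graded_hom_of_separating_family'
    {Γ : Type u} [Group Γ] [DecidableEq Γ] {R : Type v} [Ring R] [Nontrivial R]
    (𝒜 : Γ → AddSubgroup R)
    (hinternal : DirectSum.IsInternal 𝒜)
    (hone : (1 : R) ∈ 𝒜 1)
    (hmul : ∀ {γ δ : Γ} {x y : R}, x ∈ 𝒜 γ → y ∈ 𝒜 δ → x * y ∈ 𝒜 (γ * δ))
    (hdom : ∀ {γ δ : Γ} {x y : R}, x ∈ 𝒜 γ → y ∈ 𝒜 δ → x * y = 0 → x = 0 ∨ y = 0)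
    (hsep : ∀ (γ : Γ) (a : R), a ∈ 𝒜 γ → a ≠ 0 →
      ∃ d : GrDivRingHom Γ R 𝒜, d.φ a ≠ 0) :
    ∃ d : GrDivRingHom Γ R 𝒜, Function.Injective ⇑d.φ := by
  classical
  have hd : ∀ a : {p : Γ × R // p.2 ∈ 𝒜 p.1 ∧ p.2 ≠ 0},
      ∃ d : GrDivRingHom Γ R 𝒜, d.φ a.1.2 ≠ 0 :=
    fun a => hsep a.1.1 a.1.2 a.2.1 a.2.2
  choose d hdφ using hd
  let ι := {p : Γ × R // p.2 ∈ 𝒜 p.1 ∧ p.2 ≠ 0}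
  let S : R → Set ι := fun r => {a | (d a).φ r ≠ 0}
  let gens : Set (Set ι) := {t | ∃ (γ : Γ) (r : R), r ∈ 𝒜 γ ∧ r ≠ 0 ∧ t = S r}
  have hfip : ∀ t : Set (Set ι), t.Finite → t ⊆ gens →
      ∃ (γ : Γ) (r : R), r ∈ 𝒜 γ ∧ r ≠ 0 ∧ S r ⊆ ⋂₀ t := by
    intro t htfin
    refine Set.Finite.induction_on (motive := fun t _ => t ⊆ gens →
      ∃ (γ : Γ) (r : R), r ∈ 𝒜 γ ∧ r ≠ 0 ∧ S r ⊆ ⋂₀ t) t htfin ?_ ?_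
    · intro _
      exact ⟨1, 1, hone, one_ne_zero, by simp⟩
    · intro u t' _ _ ih hsub
      obtain ⟨γ', r', hm', h0', rfl⟩ := hsub (Set.mem_insert u t')
      obtain ⟨γ, r, hm, h0, hsub2⟩ :=
        ih fun x hx => hsub (Set.mem_insert_of_mem _ hx)
      refine ⟨γ' * γ, r' * r, hmul hm' hm, ?_, ?_⟩
      · intro h
        rcases hdom hm' hm h with h | h
        · exact h0' h
        · exact h0 h
      · intro a ha
        have hane : (d a).φ (r' * r) ≠ 0 := ha
        rw [_root_.map_mul] at hane
        have h1 : (d a).φ r' ≠ 0 := fun h => hane (by rw [h, zero_mul])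
        have h2 : (d a).φ r ≠ 0 := fun h => hane (by rw [h, mul_zero])
        rw [Set.sInter_insert]
        exact ⟨h1, hsub2 h2⟩
  have hne : (Filter.generate gens).NeBot := by
    rw [Filter.generate_neBot_iff]
    intro t hts htfin
    obtain ⟨γ, r, hm, h0, hsub⟩ := hfip t htfin hts
    refine ⟨⟨(γ, r), hm, h0⟩, hsub ?_⟩
    show (d ⟨(γ, r), hm, h0⟩).φ r ≠ 0
    exact hdφ ⟨(γ, r), hm, h0⟩
  let U : Ultrafilter ι := @Ultrafilter.of _ (Filter.generate gens) hne
  have hUle : (↑U : Filter ι) ≤ Filter.generate gens := Ultrafilter.of_le _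
  have hU : ∀ (γ : Γ) (x : R), x ∈ 𝒜 γ → x ≠ 0 → {a | (d a).φ x ≠ 0} ∈ U :=
    fun γ x hm h0 => hUle (Filter.mem_generate_of_mem ⟨γ, x, hm, h0, rfl⟩)
  exact ⟨ultraGr d U hinternal, ultraGr_injective d U hinternal hU⟩


/-- Let `R` be a `Γ`-graded domain.  If for every nonzero
homogeneous `a ∈ R` there exist a `Γ`-graded division ring `K_a` and a
homomorphism of `Γ`-graded rings `φ_a : R → K_a` with `φ_a a ≠ 0`, then there
exist a `Γ`-graded division ring `U` and an injective homomorphism of `Γ`-graded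
rings `R → U`. -/
theorem exists_injective_graded_hom_of_separating_family
    {Γ : Type u} [Group Γ] [DecidableEq Γ] {R : Type v} [Ring R] [Nontrivial R]
    (𝒜 : Γ → AddSubgroup R)
    (hinternal : DirectSum.IsInternal 𝒜)
    (hone : (1 : R) ∈ 𝒜 1)
    (hmul : ∀ {γ δ : Γ} {x y : R}, x ∈ 𝒜 γ → y ∈ 𝒜 δ → x * y ∈ 𝒜 (γ * δ))
    (hdom : ∀ {γ δ : Γ} {x y : R}, x ∈ 𝒜 γ → y ∈ 𝒜 δ → x * y = 0 → x = 0 ∨ y = 0)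
    (hsep : ∀ (γ : Γ) (a : R), a ∈ 𝒜 γ → a ≠ 0 →
      ∃ d : GrDivRingHom Γ R 𝒜, d.φ a ≠ 0) :
    ∃ d : GrDivRingHom Γ R 𝒜, Function.Injective ⇑d.φ :=
  exists_injective_graded_hom_of_separating_family' 𝒜 hinternal hone
    (fun h1 h2 => hmul h1 h2) (fun h1 h2 h3 => hdom h1 h2 h3) hsep
end

section
/- Let Γ be a group, R a Γ-graded ring, and let rank be a gr-Sylvester matrix rank function for R, i.e., an ℕ-valued function on the rectangular homogeneous matrices over R such that: (MatRF1) the rank of the 1×1 identity matrix is 1; (MatRF2) rank(AB) ≤ min(rank A, rank B) whenever A is homogeneous of distribution (ᾱ, β̄) and B is homogeneous of distribution (β̄, ε̄); (MatRF3) rank(A ⊕ B) = rank A + rank B for all homogeneous A, B; (MatRF4) the rank of the block matrix [[A, C], [0, B]] is at least rank A + rank B whenever A, B, C are homogeneous of distributions (ᾱ, β̄), (δ̄, ε̄), (ᾱ, ε̄) respectively. Then the set 𝒫 = {A ∈ 𝔐(R) : rank A < n, where A is n×n} is a gr-prime matrix ideal of R. -/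
set_option linter.unusedSectionVars false
set_option maxHeartbeats 1000000


open Matrix

universe u v w

section MyMachinery1
variable {Γ : Type u} [Group Γ] {R : Type v} [Ring R]
-- ==== my machinery ====

/-- general-index homogeneity -/
def HomogG (𝒜 : Γ → AddSubgroup R) {I J : Type*} (A : Matrix I J R) (α : I → Γ) (β : J → Γ) : Prop :=
  ∀ i j, A i j ∈ 𝒜 (α i * (β j)⁻¹)

theorem homog_iff {𝒜 : Γ → AddSubgroup R} {m n : ℕ} {A : Matrix (Fin m) (Fin n) R}
    {α β} : IsHomog 𝒜 A α β ↔ HomogG 𝒜 A α β := Iff.rfl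

namespace HomogG

variable {𝒜 : Γ → AddSubgroup R} {I J K I' J' : Type*}

theorem zero {α : I → Γ} {β : J → Γ} : HomogG 𝒜 (0 : Matrix I J R) α β :=
  fun _ _ => (𝒜 _).zero_mem

theorem one [DecidableEq I] (h1 : (1 : R) ∈ 𝒜 1) (α : I → Γ) :
    HomogG 𝒜 (1 : Matrix I I R) α α := by
  intro i j
  rcases eq_or_ne i j with rfl | h
  · simpa [Matrix.one_apply] using h1
  · simp [Matrix.one_apply, h, (𝒜 _).zero_mem]

theorem neg {A : Matrix I J R} {α β} (h : HomogG 𝒜 A α β) : HomogG 𝒜 (-A) α β :=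
  fun i j => (𝒜 _).neg_mem (h i j)

theorem add {A B : Matrix I J R} {α β} (hA : HomogG 𝒜 A α β) (hB : HomogG 𝒜 B α β) :
    HomogG 𝒜 (A + B) α β := fun i j => (𝒜 _).add_mem (hA i j) (hB i j)

theorem submatrix {A : Matrix I J R} {α β} (h : HomogG 𝒜 A α β) (e : I' → I) (f : J' → J) :
    HomogG 𝒜 (A.submatrix e f) (α ∘ e) (β ∘ f) := fun i j => h (e i) (f j)

theorem mul [Fintype J]
    (hmul : ∀ {γ δ : Γ} {x y : R}, x ∈ 𝒜 γ → y ∈ 𝒜 δ → x * y ∈ 𝒜 (γ * δ))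
    {A : Matrix I J R} {B : Matrix J K R} {α : I → Γ} {β : J → Γ} {ε : K → Γ}
    (hA : HomogG 𝒜 A α β) (hB : HomogG 𝒜 B β ε) : HomogG 𝒜 (A * B) α ε := by
  intro i j
  rw [Matrix.mul_apply]
  refine AddSubgroup.sum_mem _ fun k _ => ?_
  have := hmul (hA i k) (hB k j)
  simpa [mul_assoc] using this

theorem fromBlocks {A : Matrix I J R} {B : Matrix I J' R} {C : Matrix I' J R}
    {D : Matrix I' J' R} {α : I → Γ} {α' : I' → Γ} {β : J → Γ} {β' : J' → Γ}
    (hA : HomogG 𝒜 A α β) (hB : HomogG 𝒜 B α β') (hC : HomogG 𝒜 C α' β)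
    (hD : HomogG 𝒜 D α' β') :
    HomogG 𝒜 (Matrix.fromBlocks A B C D) (Sum.elim α α') (Sum.elim β β') := by
  rintro (i | i) (j | j) <;> first
    | exact hA i j | exact hB i j | exact hC i j | exact hD i j

end HomogG

/-- `[P | Q]` horizontal concatenation -/
def hcatS {I J J' : Type*} (P : Matrix I J R) (Q : Matrix I J' R) : Matrix I (J ⊕ J') R :=
  Matrix.of fun i => Sum.elim (P i) (Q i)

@[simp] theorem hcatS_inl {I J J' : Type*} (P : Matrix I J R) (Q : Matrix I J' R) (i j) :
    hcatS P Q i (Sum.inl j) = P i j := rfl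

@[simp] theorem hcatS_inr {I J J' : Type*} (P : Matrix I J R) (Q : Matrix I J' R) (i j) :
    hcatS P Q i (Sum.inr j) = Q i j := rfl

theorem HomogG.hcat {𝒜 : Γ → AddSubgroup R} {I J J' : Type*} {P : Matrix I J R}
    {Q : Matrix I J' R} {α : I → Γ} {β : J → Γ} {β' : J' → Γ}
    (hP : HomogG 𝒜 P α β) (hQ : HomogG 𝒜 Q α β') :
    HomogG 𝒜 (hcatS P Q) α (Sum.elim β β') := by
  rintro i (j | j)
  · exact hP i j
  · exact hQ i j




end MyMachinery1

section Mach
variable {Γ : Type u} [Group Γ] {R : Type v} [Ring R]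

structure RkData (Γ : Type u) [Group Γ] (R : Type v) [Ring R] (𝒜 : Γ → AddSubgroup R) where
  rk : ∀ {m n : ℕ}, Matrix (Fin m) (Fin n) R → ℕ
  hone : (1 : R) ∈ 𝒜 1
  hmul : ∀ {γ δ : Γ} {x y : R}, x ∈ 𝒜 γ → y ∈ 𝒜 δ → x * y ∈ 𝒜 (γ * δ)
  hrk1 : rk (1 : Matrix (Fin 1) (Fin 1) R) = 1
  hrk2 : ∀ {m n k : ℕ} (A : Matrix (Fin m) (Fin n) R) (B : Matrix (Fin n) (Fin k) R)
      (α : Fin m → Γ) (β : Fin n → Γ) (ε : Fin k → Γ),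
      IsHomog 𝒜 A α β → IsHomog 𝒜 B β ε → rk (A * B) ≤ min (rk A) (rk B)
  hrk3 : ∀ {m n m' n' : ℕ} (A : Matrix (Fin m) (Fin n) R)
      (B : Matrix (Fin m') (Fin n') R),
      IsHomogSq 𝒜 A → IsHomogSq 𝒜 B → rk (diagSum A B) = rk A + rk B
  hrk4 : ∀ {m n m' n' : ℕ} (A : Matrix (Fin m) (Fin n) R)
      (B : Matrix (Fin m') (Fin n') R) (C : Matrix (Fin m) (Fin n') R)
      (α : Fin m → Γ) (β : Fin n → Γ) (δ : Fin m' → Γ) (ε : Fin n' → Γ),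
      IsHomog 𝒜 A α β → IsHomog 𝒜 B δ ε → IsHomog 𝒜 C α ε →
      rk A + rk B ≤ rk (upperBlockSum A B C)

namespace RkData
variable {𝒜 : Γ → AddSubgroup R} (d : RkData Γ R 𝒜)

theorem rk_one : ∀ n : ℕ, d.rk (1 : Matrix (Fin n) (Fin n) R) = n := by
  have hsq : ∀ n : ℕ, IsHomogSq 𝒜 (1 : Matrix (Fin n) (Fin n) R) :=
    fun n => ⟨fun _ => 1, fun _ => 1, HomogG.one d.hone _⟩
  have key : ∀ m k : ℕ, diagSum (1 : Matrix (Fin m) (Fin m) R) (1 : Matrix (Fin k) (Fin k) R)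
      = (1 : Matrix (Fin (m + k)) (Fin (m + k)) R) := by
    intro m k
    rw [diagSum, Matrix.fromBlocks_one]
    exact Matrix.submatrix_one_equiv finSumFinEquiv.symm
  intro n
  induction n with
  | zero =>
    have h0 := d.hrk3 (1 : Matrix (Fin 0) (Fin 0) R) (1 : Matrix (Fin 0) (Fin 0) R)
      (hsq 0) (hsq 0)
    rw [key 0 0] at h0
    omega
  | succ n ih =>
    have h := d.hrk3 (1 : Matrix (Fin n) (Fin n) R) (1 : Matrix (Fin 1) (Fin 1) R)
      (hsq n) (hsq 1)
    rw [key n 1] at h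
    rw [h, ih, d.hrk1]

theorem rk_mul_le_left {m n k : ℕ} {A : Matrix (Fin m) (Fin n) R} {B : Matrix (Fin n) (Fin k) R}
    {α β ε} (hA : HomogG 𝒜 A α β) (hB : HomogG 𝒜 B β ε) : d.rk (A * B) ≤ d.rk A :=
  (d.hrk2 A B α β ε hA hB).trans (min_le_left _ _)

theorem rk_mul_le_right {m n k : ℕ} {A : Matrix (Fin m) (Fin n) R} {B : Matrix (Fin n) (Fin k) R}
    {α β ε} (hA : HomogG 𝒜 A α β) (hB : HomogG 𝒜 B β ε) : d.rk (A * B) ≤ d.rk B :=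
  (d.hrk2 A B α β ε hA hB).trans (min_le_right _ _)

theorem rk_le_cols {m n : ℕ} {A : Matrix (Fin m) (Fin n) R} {α β} (hA : HomogG 𝒜 A α β) :
    d.rk A ≤ n := by
  have h := d.rk_mul_le_right (B := (1 : Matrix (Fin n) (Fin n) R)) hA (HomogG.one d.hone β)
  rw [Matrix.mul_one, d.rk_one] at h
  exact h

theorem rk_le_rows {m n : ℕ} {A : Matrix (Fin m) (Fin n) R} {α β} (hA : HomogG 𝒜 A α β) :
    d.rk A ≤ m := by
  have h := d.rk_mul_le_left (A := (1 : Matrix (Fin m) (Fin m) R)) (HomogG.one d.hone α) hA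
  rw [Matrix.one_mul, d.rk_one] at h
  exact h

theorem rk_perm_le {m n : ℕ} {A : Matrix (Fin m) (Fin n) R} {α β} (hA : HomogG 𝒜 A α β)
    (e : Fin m ≃ Fin m) (f : Fin n ≃ Fin n) : d.rk (A.submatrix ⇑e ⇑f) ≤ d.rk A := by
  set E : Matrix (Fin m) (Fin m) R := (1 : Matrix (Fin m) (Fin m) R).submatrix ⇑e id with hE
  set F : Matrix (Fin n) (Fin n) R := (1 : Matrix (Fin n) (Fin n) R).submatrix id ⇑f with hF
  have hEh : HomogG 𝒜 E (α ∘ ⇑e) α := HomogG.submatrix (HomogG.one d.hone α) ⇑e id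
  have hFh : HomogG 𝒜 F β (β ∘ ⇑f) := HomogG.submatrix (HomogG.one d.hone β) id ⇑f
  have hEA : E * A = A.submatrix ⇑e id := by
    ext i j
    simp [hE, Matrix.mul_apply, Matrix.one_apply]
  have hAf : A.submatrix ⇑e ⇑f = (E * A) * F := by
    rw [hEA]
    ext i j
    simp [hF, Matrix.mul_apply, Matrix.one_apply]
  have hEAh : HomogG 𝒜 (E * A) (α ∘ ⇑e) β := HomogG.mul d.hmul hEh hA
  calc d.rk (A.submatrix ⇑e ⇑f) = d.rk ((E * A) * F) := by rw [hAf]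
    _ ≤ d.rk (E * A) := d.rk_mul_le_left hEAh hFh
    _ ≤ d.rk A := d.rk_mul_le_right hEh hA

theorem rk_perm_eq {m n : ℕ} {A : Matrix (Fin m) (Fin n) R} {α β} (hA : HomogG 𝒜 A α β)
    (e : Fin m ≃ Fin m) (f : Fin n ≃ Fin n) : d.rk (A.submatrix ⇑e ⇑f) = d.rk A := by
  refine le_antisymm (d.rk_perm_le hA e f) ?_
  have h2 := d.rk_perm_le (HomogG.submatrix hA ⇑e ⇑f) e.symm f.symm
  have : (A.submatrix ⇑e ⇑f).submatrix ⇑e.symm ⇑f.symm = A := by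
    ext i j; simp
  rwa [this] at h2

theorem rk_subm_eq {I J : Type} [Fintype I] [Fintype J] {p q p' q' : ℕ}
    {A : Matrix I J R} {α β} (hA : HomogG 𝒜 A α β)
    (u : Fin p ≃ I) (v : Fin q ≃ J) (u' : Fin p' ≃ I) (v' : Fin q' ≃ J) :
    d.rk (A.submatrix ⇑u ⇑v) = d.rk (A.submatrix ⇑u' ⇑v') := by
  have hp : p = p' := by
    have := Fintype.card_congr (u.trans u'.symm); simpa using this
  have hq : q = q' := by
    have := Fintype.card_congr (v.trans v'.symm); simpa using this
  subst hp; subst hq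
  have key : A.submatrix ⇑u ⇑v
      = (A.submatrix ⇑u' ⇑v').submatrix ⇑(u.trans u'.symm) ⇑(v.trans v'.symm) := by
    ext i j; simp
  rw [key]
  exact d.rk_perm_eq (HomogG.submatrix hA ⇑u' ⇑v') _ _

/-- rank of matrices over arbitrary finite index types -/
noncomputable def rk' {I J : Type} [Fintype I] [Fintype J] (A : Matrix I J R) : ℕ :=
  d.rk (A.submatrix ⇑(Fintype.equivFin I).symm ⇑(Fintype.equivFin J).symm)

theorem rk'_eq_subm {I J : Type} [Fintype I] [Fintype J] {p q : ℕ}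
    {A : Matrix I J R} {α β} (hA : HomogG 𝒜 A α β) (u : Fin p ≃ I) (v : Fin q ≃ J) :
    d.rk' A = d.rk (A.submatrix ⇑u ⇑v) :=
  d.rk_subm_eq hA _ _ u v

theorem rk'_eq_rk {m n : ℕ} {A : Matrix (Fin m) (Fin n) R} {α β} (hA : HomogG 𝒜 A α β) :
    d.rk' A = d.rk A := by
  have := d.rk'_eq_subm hA (Equiv.refl (Fin m)) (Equiv.refl (Fin n))
  simpa using this

theorem rk'_subm {I J I' J' : Type} [Fintype I] [Fintype J] [Fintype I'] [Fintype J']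
    {A : Matrix I J R} {α β} (hA : HomogG 𝒜 A α β) (e : I' ≃ I) (f : J' ≃ J) :
    d.rk' (A.submatrix ⇑e ⇑f) = d.rk' A := by
  have h1 : d.rk' (A.submatrix ⇑e ⇑f)
      = d.rk (A.submatrix ⇑(((Fintype.equivFin I').symm).trans e)
          ⇑(((Fintype.equivFin J').symm).trans f)) := by
    rw [rk', Matrix.submatrix_submatrix]
    rfl
  rw [h1, ← d.rk'_eq_subm hA (((Fintype.equivFin I').symm).trans e)
    (((Fintype.equivFin J').symm).trans f)]


theorem rk'_one {I : Type} [Fintype I] [DecidableEq I] :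
    d.rk' (1 : Matrix I I R) = Fintype.card I := by
  rw [rk', Matrix.submatrix_one_equiv (Fintype.equivFin I).symm, d.rk_one]

theorem rk'_le_cols {I J : Type} [Fintype I] [Fintype J] {A : Matrix I J R} {α β}
    (hA : HomogG 𝒜 A α β) : d.rk' A ≤ Fintype.card J := by
  rw [rk']
  exact d.rk_le_cols (HomogG.submatrix hA _ _)

theorem rk'_mul_le_left {I J K : Type} [Fintype I] [Fintype J] [Fintype K]
    {A : Matrix I J R} {B : Matrix J K R} {α β ε}
    (hA : HomogG 𝒜 A α β) (hB : HomogG 𝒜 B β ε) : d.rk' (A * B) ≤ d.rk' A := by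
  rw [rk', ← Matrix.submatrix_mul_equiv A B _ (Fintype.equivFin J).symm _]
  exact (d.rk_mul_le_left (HomogG.submatrix hA _ _) (HomogG.submatrix hB _ _)).trans_eq rfl

theorem rk'_mul_le_right {I J K : Type} [Fintype I] [Fintype J] [Fintype K]
    {A : Matrix I J R} {B : Matrix J K R} {α β ε}
    (hA : HomogG 𝒜 A α β) (hB : HomogG 𝒜 B β ε) : d.rk' (A * B) ≤ d.rk' B := by
  rw [rk', ← Matrix.submatrix_mul_equiv A B _ (Fintype.equivFin J).symm _]
  exact (d.rk_mul_le_right (HomogG.submatrix hA _ _) (HomogG.submatrix hB _ _)).trans_eq rfl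

theorem rk'_mul_eq_left {I I' J : Type} [Fintype I] [Fintype I'] [Fintype J] [DecidableEq I']
    {E : Matrix I I' R} {E' : Matrix I' I R} {M : Matrix I' J R} {α α' β}
    (hE : HomogG 𝒜 E α α') (hE' : HomogG 𝒜 E' α' α) (hM : HomogG 𝒜 M α' β)
    (hinv : E' * E = 1) : d.rk' (E * M) = d.rk' M := by
  refine le_antisymm (d.rk'_mul_le_right hE hM) ?_
  have h2 := d.rk'_mul_le_right hE' (HomogG.mul d.hmul hE hM)
  rwa [← Matrix.mul_assoc, hinv, Matrix.one_mul] at h2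

theorem rk'_mul_eq_right {I J J' : Type} [Fintype I] [Fintype J] [Fintype J'] [DecidableEq J]
    {M : Matrix I J R} {F : Matrix J J' R} {F' : Matrix J' J R} {α β β'}
    (hM : HomogG 𝒜 M α β) (hF : HomogG 𝒜 F β β') (hF' : HomogG 𝒜 F' β' β)
    (hinv : F * F' = 1) : d.rk' (M * F) = d.rk' M := by
  refine le_antisymm (d.rk'_mul_le_left hM hF) ?_
  have h2 := d.rk'_mul_le_left (HomogG.mul d.hmul hM hF) hF'
  rwa [Matrix.mul_assoc, hinv, Matrix.mul_one] at h2

theorem rk'_fromBlocks_diag {I I' J J' : Type} [Fintype I] [Fintype I'] [Fintype J] [Fintype J']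
    {A : Matrix I J R} {B : Matrix I' J' R} {α β α' β'}
    (hA : HomogG 𝒜 A α β) (hB : HomogG 𝒜 B α' β') :
    d.rk' (Matrix.fromBlocks A 0 0 B) = d.rk' A + d.rk' B := by
  have hF : HomogG 𝒜 (Matrix.fromBlocks A 0 0 B) (Sum.elim α α') (Sum.elim β β') :=
    HomogG.fromBlocks hA HomogG.zero HomogG.zero hB
  rw [d.rk'_eq_subm hF
    (finSumFinEquiv.symm.trans (Equiv.sumCongr (Fintype.equivFin I).symm (Fintype.equivFin I').symm))
    (finSumFinEquiv.symm.trans (Equiv.sumCongr (Fintype.equivFin J).symm (Fintype.equivFin J').symm))]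
  have key : (Matrix.fromBlocks A 0 0 B).submatrix
      ⇑(finSumFinEquiv.symm.trans (Equiv.sumCongr (Fintype.equivFin I).symm (Fintype.equivFin I').symm))
      ⇑(finSumFinEquiv.symm.trans (Equiv.sumCongr (Fintype.equivFin J).symm (Fintype.equivFin J').symm))
      = diagSum (A.submatrix ⇑(Fintype.equivFin I).symm ⇑(Fintype.equivFin J).symm)
          (B.submatrix ⇑(Fintype.equivFin I').symm ⇑(Fintype.equivFin J').symm) := by
    ext i j
    simp only [Matrix.submatrix_apply, diagSum, Matrix.reindex_apply, Equiv.trans_apply]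
    cases hi : finSumFinEquiv.symm i <;> cases hj : finSumFinEquiv.symm j <;> simp [hi, hj]
  rw [key,
    d.hrk3 _ _ ⟨_, _, HomogG.submatrix hA _ _⟩ ⟨_, _, HomogG.submatrix hB _ _⟩]
  rfl

theorem rk'_fromBlocks_upper_ge {I I' J J' : Type} [Fintype I] [Fintype I'] [Fintype J] [Fintype J']
    {A : Matrix I J R} {B : Matrix I' J' R} {C : Matrix I J' R} {α β α' β'}
    (hA : HomogG 𝒜 A α β) (hB : HomogG 𝒜 B α' β') (hC : HomogG 𝒜 C α β') :
    d.rk' A + d.rk' B ≤ d.rk' (Matrix.fromBlocks A C 0 B) := by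
  have hF : HomogG 𝒜 (Matrix.fromBlocks A C 0 B) (Sum.elim α α') (Sum.elim β β') :=
    HomogG.fromBlocks hA hC HomogG.zero hB
  rw [d.rk'_eq_subm hF
    (finSumFinEquiv.symm.trans (Equiv.sumCongr (Fintype.equivFin I).symm (Fintype.equivFin I').symm))
    (finSumFinEquiv.symm.trans (Equiv.sumCongr (Fintype.equivFin J).symm (Fintype.equivFin J').symm))]
  have key : (Matrix.fromBlocks A C 0 B).submatrix
      ⇑(finSumFinEquiv.symm.trans (Equiv.sumCongr (Fintype.equivFin I).symm (Fintype.equivFin I').symm))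
      ⇑(finSumFinEquiv.symm.trans (Equiv.sumCongr (Fintype.equivFin J).symm (Fintype.equivFin J').symm))
      = upperBlockSum (A.submatrix ⇑(Fintype.equivFin I).symm ⇑(Fintype.equivFin J).symm)
          (B.submatrix ⇑(Fintype.equivFin I').symm ⇑(Fintype.equivFin J').symm)
          (C.submatrix ⇑(Fintype.equivFin I).symm ⇑(Fintype.equivFin J').symm) := by
    ext i j
    simp only [Matrix.submatrix_apply, upperBlockSum, Matrix.reindex_apply, Equiv.trans_apply]
    cases hi : finSumFinEquiv.symm i <;> cases hj : finSumFinEquiv.symm j <;> simp [hi, hj]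
  rw [key]
  exact d.hrk4 _ _ _ _ _ _ _ (HomogG.submatrix hA _ _) (HomogG.submatrix hB _ _)
    (HomogG.submatrix hC _ _)

theorem rk'_fromBlocks_lower_ge {I I' J J' : Type} [Fintype I] [Fintype I'] [Fintype J] [Fintype J']
    {A : Matrix I J R} {B : Matrix I' J' R} {C : Matrix I' J R} {α β α' β'}
    (hA : HomogG 𝒜 A α β) (hB : HomogG 𝒜 B α' β') (hC : HomogG 𝒜 C α' β) :
    d.rk' A + d.rk' B ≤ d.rk' (Matrix.fromBlocks A 0 C B) := by
  have hF : HomogG 𝒜 (Matrix.fromBlocks A 0 C B) (Sum.elim α α') (Sum.elim β β') :=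
    HomogG.fromBlocks hA HomogG.zero hC hB
  have swap : (Matrix.fromBlocks A 0 C B).submatrix ⇑(Equiv.sumComm I' I) ⇑(Equiv.sumComm J' J)
      = Matrix.fromBlocks B C 0 A := by
    ext (i | i) (j | j) <;> rfl
  have h1 := d.rk'_subm hF (Equiv.sumComm I' I) (Equiv.sumComm J' J)
  rw [swap] at h1
  rw [← h1, add_comm]
  exact d.rk'_fromBlocks_upper_ge hB hA hC


theorem detSumCol {nn : ℕ} (A B C : Matrix (Fin nn) (Fin nn) R) (α β : Fin nn → Γ)
    (hA : HomogG 𝒜 A α β) (hB : HomogG 𝒜 B α β) (c : Fin nn)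
    (hAB : ∀ i j, j ≠ c → A i j = B i j)
    (hC : ∀ i j, C i j = if j = c then A i j + B i j else A i j)
    (hrA : d.rk A < nn) (hrB : d.rk B < nn) : d.rk C < nn := by
  obtain ⟨m, rfl⟩ : ∃ m, nn = m + 1 := ⟨nn - 1, by have := c.pos; omega⟩
  classical
  set τ : (Fin m ⊕ Fin 1) ≃ Fin (m + 1) := finSumFinEquiv.trans (Equiv.swap (Fin.last m) c)
    with hτdef
  have hτr : ∀ j : Fin 1, τ (Sum.inr j) = c := by
    intro j
    have h0 : finSumFinEquiv (Sum.inr j) = Fin.last m := by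
      have : (j : ℕ) = 0 := by omega
      simp [Fin.ext_iff, this]
    rw [hτdef, Equiv.trans_apply, h0, Equiv.swap_apply_left]
  have hτl : ∀ k : Fin m, τ (Sum.inl k) ≠ c := by
    intro k
    have h1 : finSumFinEquiv (Sum.inl k) ≠ Fin.last m := by
      have := k.isLt
      simp [Fin.ext_iff]
      omega
    rw [hτdef, Equiv.trans_apply, Equiv.swap_apply_def]
    split_ifs with h2 h3
    · exact absurd h2 h1
    · exact fun hlc => h1 (h3.trans hlc.symm)
    · exact h3
  -- column-rearranged matrices
  set A₀ : Matrix (Fin (m + 1)) (Fin m) R := A.submatrix id (fun k => τ (Sum.inl k)) with hA₀def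
  set colA : Matrix (Fin (m + 1)) (Fin 1) R := Matrix.of fun i _ => A i c with hcolAdef
  set colB : Matrix (Fin (m + 1)) (Fin 1) R := Matrix.of fun i _ => B i c with hcolBdef
  set β₀ : Fin m → Γ := fun k => β (τ (Sum.inl k)) with hβ₀def
  set βc : Fin 1 → Γ := fun _ => β c with hβcdef
  set βS : (Fin m ⊕ Fin 1) → Γ := Sum.elim β₀ βc with hβSdef
  have hA₀h : HomogG 𝒜 A₀ α β₀ := fun i k => hA i _
  have hcolAh : HomogG 𝒜 colA α βc := fun i j => hA i c
  have hcolBh : HomogG 𝒜 colB α βc := fun i j => hB i c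
  have hA1 : A.submatrix id ⇑τ = hcatS A₀ colA := by
    ext i u
    rcases u with k | j
    · rfl
    · show A i (τ (Sum.inr j)) = A i c
      rw [hτr]
  have hB1 : B.submatrix id ⇑τ = hcatS A₀ colB := by
    ext i u
    rcases u with k | j
    · exact (hAB i _ (hτl k)).symm
    · show B i (τ (Sum.inr j)) = B i c
      rw [hτr]
  have hC1 : C.submatrix id ⇑τ = hcatS A₀ (colA + colB) := by
    ext i u
    rcases u with k | j
    · show C i (τ (Sum.inl k)) = A i (τ (Sum.inl k))
      rw [hC, if_neg (hτl k)]
    · show C i (τ (Sum.inr j)) = (colA + colB) i j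
      rw [hτr, hC, if_pos rfl]
      rfl
  have hAch : HomogG 𝒜 (hcatS A₀ colA) α βS := HomogG.hcat hA₀h hcolAh
  have hBch : HomogG 𝒜 (hcatS A₀ colB) α βS := HomogG.hcat hA₀h hcolBh
  have hCch : HomogG 𝒜 (hcatS A₀ (colA + colB)) α βS :=
    HomogG.hcat hA₀h (HomogG.add hcolAh hcolBh)
  -- transporting ranks over τ
  have hrkA1 : d.rk' (hcatS A₀ colA) = d.rk A := by
    rw [← hA1]
    have h := d.rk'_subm hA (Equiv.refl (Fin (m + 1))) τ
    rw [Equiv.coe_refl] at h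
    rw [h.trans (d.rk'_eq_rk hA)]
  have hrkB1 : d.rk' (hcatS A₀ colB) = d.rk B := by
    rw [← hB1]
    have h := d.rk'_subm hB (Equiv.refl (Fin (m + 1))) τ
    rw [Equiv.coe_refl] at h
    rw [h.trans (d.rk'_eq_rk hB)]
  have hrkC1 : d.rk' (hcatS A₀ (colA + colB)) = d.rk C := by
    have hCh : HomogG 𝒜 C α β := by
      intro i j
      rw [hC]
      split_ifs
      · exact (𝒜 _).add_mem (hA i j) (hB i j)
      · exact hA i j
    rw [← hC1]
    have h := d.rk'_subm hCh (Equiv.refl (Fin (m + 1))) τ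
    rw [Equiv.coe_refl] at h
    rw [h.trans (d.rk'_eq_rk hCh)]
  -- step (b) : rk C₁ ≤ rk A₀ + 1
  have hPD : hcatS (1 : Matrix (Fin (m + 1)) (Fin (m + 1)) R) (colA + colB) *
      Matrix.fromBlocks A₀ 0 0 (1 : Matrix (Fin 1) (Fin 1) R) = hcatS A₀ (colA + colB) := by
    ext i u
    rcases u with k | j
    · simp [Matrix.mul_apply, Fintype.sum_sum_type, Matrix.one_apply]
    · have hj : j = 0 := Subsingleton.elim j 0
      subst hj
      simp [Matrix.mul_apply, Fintype.sum_sum_type, Matrix.one_apply]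
  have hb : d.rk' (hcatS A₀ (colA + colB)) ≤ d.rk' A₀ + 1 := by
    rw [← hPD]
    have h1 : d.rk' (hcatS (1 : Matrix (Fin (m + 1)) (Fin (m + 1)) R) (colA + colB) *
        Matrix.fromBlocks A₀ 0 0 (1 : Matrix (Fin 1) (Fin 1) R)) ≤
        d.rk' (Matrix.fromBlocks A₀ 0 0 (1 : Matrix (Fin 1) (Fin 1) R)) :=
      d.rk'_mul_le_right (HomogG.hcat (HomogG.one d.hone α) (HomogG.add hcolAh hcolBh))
        (HomogG.fromBlocks hA₀h HomogG.zero HomogG.zero (HomogG.one d.hone βc))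
    refine h1.trans ?_
    rw [d.rk'_fromBlocks_diag hA₀h (HomogG.one d.hone βc), d.rk'_one]
    simp
  -- step (c)
  set Em : Matrix ((Fin (m + 1)) ⊕ (Fin (m + 1))) ((Fin (m + 1)) ⊕ (Fin (m + 1))) R :=
    Matrix.fromBlocks 1 1 0 1 with hEmdef
  set Em' : Matrix ((Fin (m + 1)) ⊕ (Fin (m + 1))) ((Fin (m + 1)) ⊕ (Fin (m + 1))) R :=
    Matrix.fromBlocks 1 (-1) 0 1 with hEm'def
  set S : Matrix (Fin m ⊕ Fin 1) (Fin m ⊕ Fin 1) R :=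
    Matrix.fromBlocks (1 : Matrix (Fin m) (Fin m) R) 0 0 0 with hSdef
  set Fm : Matrix ((Fin m ⊕ Fin 1) ⊕ (Fin m ⊕ Fin 1)) ((Fin m ⊕ Fin 1) ⊕ (Fin m ⊕ Fin 1)) R :=
    Matrix.fromBlocks 1 (-S) 0 1 with hFmdef
  set Fm' : Matrix ((Fin m ⊕ Fin 1) ⊕ (Fin m ⊕ Fin 1)) ((Fin m ⊕ Fin 1) ⊕ (Fin m ⊕ Fin 1)) R :=
    Matrix.fromBlocks 1 S 0 1 with hFm'def
  set Dd : Matrix ((Fin (m + 1)) ⊕ (Fin (m + 1))) ((Fin m ⊕ Fin 1) ⊕ (Fin m ⊕ Fin 1)) R :=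
    Matrix.fromBlocks (hcatS A₀ colA) 0 0 (hcatS A₀ colB) with hDddef
  have hShom : HomogG 𝒜 S βS βS := by
    rw [hSdef, hβSdef]
    exact HomogG.fromBlocks (HomogG.one d.hone β₀) HomogG.zero HomogG.zero HomogG.zero
  have hEmh : HomogG 𝒜 Em (Sum.elim α α) (Sum.elim α α) :=
    HomogG.fromBlocks (HomogG.one d.hone α) (HomogG.one d.hone α) HomogG.zero
      (HomogG.one d.hone α)
  have hEm'h : HomogG 𝒜 Em' (Sum.elim α α) (Sum.elim α α) :=
    HomogG.fromBlocks (HomogG.one d.hone α) (HomogG.neg (HomogG.one d.hone α)) HomogG.zero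
      (HomogG.one d.hone α)
  have hFmh : HomogG 𝒜 Fm (Sum.elim βS βS) (Sum.elim βS βS) :=
    HomogG.fromBlocks (HomogG.one d.hone βS) (HomogG.neg hShom) HomogG.zero
      (HomogG.one d.hone βS)
  have hFm'h : HomogG 𝒜 Fm' (Sum.elim βS βS) (Sum.elim βS βS) :=
    HomogG.fromBlocks (HomogG.one d.hone βS) hShom HomogG.zero (HomogG.one d.hone βS)
  have hDdh : HomogG 𝒜 Dd (Sum.elim α α) (Sum.elim βS βS) :=
    HomogG.fromBlocks hAch HomogG.zero HomogG.zero hBch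
  have hEmInv : Em' * Em = 1 := by
    rw [hEmdef, hEm'def, Matrix.fromBlocks_multiply]
    simp [Matrix.fromBlocks_one]
  have hFmInv : Fm * Fm' = 1 := by
    rw [hFmdef, hFm'def, Matrix.fromBlocks_multiply]
    simp [Matrix.fromBlocks_one]
  have hAS : hcatS A₀ colA * S = hcatS A₀ (0 : Matrix (Fin (m + 1)) (Fin 1) R) := by
    rw [hSdef]
    ext i u
    rcases u with k | j <;>
      simp [Matrix.mul_apply, Fintype.sum_sum_type, Matrix.one_apply]
  have hZeq : (Em * Dd) * Fm = Matrix.fromBlocks (hcatS A₀ colA)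
      (hcatS (0 : Matrix (Fin (m + 1)) (Fin m) R) colB) 0 (hcatS A₀ colB) := by
    have hED : Em * Dd = Matrix.fromBlocks (hcatS A₀ colA) (hcatS A₀ colB) 0
        (hcatS A₀ colB) := by
      rw [hEmdef, hDddef, Matrix.fromBlocks_multiply]
      simp
    rw [hED, hFmdef, Matrix.fromBlocks_multiply]
    have h12 : hcatS A₀ colA * (-S) + hcatS A₀ colB *
        (1 : Matrix (Fin m ⊕ Fin 1) (Fin m ⊕ Fin 1) R) =
        hcatS (0 : Matrix (Fin (m + 1)) (Fin m) R) colB := by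
      rw [Matrix.mul_neg, hAS, Matrix.mul_one]
      ext i u
      rcases u with k | j <;> simp
    rw [h12]
    simp
  have hrkZ : d.rk' ((Em * Dd) * Fm) = d.rk' (hcatS A₀ colA) + d.rk' (hcatS A₀ colB) := by
    rw [d.rk'_mul_eq_right (HomogG.mul d.hmul hEmh hDdh) hFmh hFm'h hFmInv,
      d.rk'_mul_eq_left hEmh hEm'h hDdh hEmInv, hDddef,
      d.rk'_fromBlocks_diag hAch hBch]
  -- regrouping
  set g : ((Fin m ⊕ Fin 1) ⊕ Fin 1) ⊕ Fin m ≃ (Fin m ⊕ Fin 1) ⊕ (Fin m ⊕ Fin 1) :=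
    (Equiv.sumAssoc (Fin m ⊕ Fin 1) (Fin 1) (Fin m)).trans
      (Equiv.sumCongr (Equiv.refl (Fin m ⊕ Fin 1)) (Equiv.sumComm (Fin 1) (Fin m))) with hgdef
  set N₃ : Matrix (Fin (m + 1)) ((Fin m ⊕ Fin 1) ⊕ Fin 1) R :=
    hcatS (hcatS A₀ colA) colB with hN₃def
  set W₃ : Matrix (Fin (m + 1)) ((Fin m ⊕ Fin 1) ⊕ Fin 1) R :=
    hcatS (0 : Matrix (Fin (m + 1)) (Fin m ⊕ Fin 1) R) colB with hW₃def
  have hN₃h : HomogG 𝒜 N₃ α (Sum.elim βS βc) := HomogG.hcat hAch hcolBh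
  have hW₃h : HomogG 𝒜 W₃ α (Sum.elim βS βc) := HomogG.hcat HomogG.zero hcolBh
  have hreg : (Matrix.fromBlocks (hcatS A₀ colA)
      (hcatS (0 : Matrix (Fin (m + 1)) (Fin m) R) colB) 0 (hcatS A₀ colB)).submatrix id ⇑g
      = Matrix.fromBlocks N₃ 0 W₃ A₀ := by
    rw [hN₃def, hW₃def, hgdef]
    ext i u
    rcases i with i | i <;> rcases u with (u | j) | k <;>
      simp [Matrix.submatrix_apply, Equiv.sumAssoc, Equiv.sumComm, Equiv.sumCongr]
  have hZh : HomogG 𝒜 (Matrix.fromBlocks (hcatS A₀ colA)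
      (hcatS (0 : Matrix (Fin (m + 1)) (Fin m) R) colB) 0 (hcatS A₀ colB))
      (Sum.elim α α) (Sum.elim βS βS) := by
    refine HomogG.fromBlocks hAch ?_ HomogG.zero hBch
    rw [hβSdef]
    exact HomogG.hcat HomogG.zero hcolBh
  have hlow : d.rk' N₃ + d.rk' A₀ ≤ d.rk' (hcatS A₀ colA) + d.rk' (hcatS A₀ colB) := by
    rw [← hrkZ, hZeq]
    have h1 := d.rk'_subm hZh (Equiv.refl _) g
    rw [Equiv.coe_refl, hreg] at h1
    rw [← h1]
    exact d.rk'_fromBlocks_lower_ge hN₃h hA₀h hW₃h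
  -- rk C₁ ≤ rk N₃
  set T : Matrix ((Fin m ⊕ Fin 1) ⊕ Fin 1) (Fin m ⊕ Fin 1) R :=
    Matrix.of (Sum.elim (fun w => (1 : Matrix (Fin m ⊕ Fin 1) (Fin m ⊕ Fin 1) R) w)
      (fun _ => Sum.elim (fun _ => (0 : R)) (fun _ => (1 : R)))) with hTdef
  have hTh : HomogG 𝒜 T (Sum.elim βS βc) βS := by
    rintro (w | x) v
    · exact (HomogG.one d.hone βS) w v
    · rcases v with k | j
      · exact (𝒜 _).zero_mem
      · show (1 : R) ∈ 𝒜 (βc x * (βS (Sum.inr j))⁻¹)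
        rw [hβSdef]
        simpa [hβcdef] using d.hone
  have hNT : N₃ * T = hcatS A₀ (colA + colB) := by
    rw [hN₃def, hTdef]
    ext i u
    rcases u with k | j
    · simp [Matrix.mul_apply, Fintype.sum_sum_type, Matrix.one_apply]
    · have hj : j = 0 := Subsingleton.elim j 0
      subst hj
      simp [Matrix.mul_apply, Fintype.sum_sum_type, Matrix.one_apply]
  have hCN : d.rk' (hcatS A₀ (colA + colB)) ≤ d.rk' N₃ := by
    rw [← hNT]
    exact d.rk'_mul_le_left hN₃h hTh
  -- conclude
  have hA₀le : d.rk' A₀ ≤ m := by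
    have := d.rk'_le_cols hA₀h
    simpa using this
  rw [← hrkC1]
  rw [← hrkA1] at hrA
  rw [← hrkB1] at hrB
  omega

theorem rk_lower_ge {m n m' n' : ℕ} {A : Matrix (Fin m) (Fin n) R}
    {B : Matrix (Fin m') (Fin n') R} {C : Matrix (Fin m') (Fin n) R} {α β δ ε}
    (hA : HomogG 𝒜 A α β) (hB : HomogG 𝒜 B δ ε) (hC : HomogG 𝒜 C δ β) :
    d.rk A + d.rk B ≤
      d.rk ((Matrix.fromBlocks A 0 C B).submatrix ⇑finSumFinEquiv.symm ⇑finSumFinEquiv.symm) := by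
  have hM : HomogG 𝒜 (Matrix.fromBlocks A 0 C B) (Sum.elim α δ) (Sum.elim β ε) :=
    HomogG.fromBlocks hA HomogG.zero hC hB
  rw [← d.rk'_eq_subm hM finSumFinEquiv.symm finSumFinEquiv.symm]
  calc d.rk A + d.rk B = d.rk' A + d.rk' B := by rw [d.rk'_eq_rk hA, d.rk'_eq_rk hB]
    _ ≤ d.rk' (Matrix.fromBlocks A 0 C B) := d.rk'_fromBlocks_lower_ge hA hB hC

end RkData
end Mach

section Opp
variable {Γ : Type u} [Group Γ] {R : Type v} [Ring R]

/-- the opposite grading on the opposite ring -/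
def oppGr (𝒜 : Γ → AddSubgroup R) : Γ → AddSubgroup Rᵐᵒᵖ := fun γ =>
  (𝒜 γ⁻¹).comap (MulOpposite.opAddEquiv (α := R)).symm.toAddMonoidHom

theorem mem_oppGr {𝒜 : Γ → AddSubgroup R} {γ : Γ} {x : Rᵐᵒᵖ} :
    x ∈ oppGr 𝒜 γ ↔ x.unop ∈ 𝒜 γ⁻¹ := Iff.rfl

/-- unop-transpose -/
def matTU {p q : ℕ} (A : Matrix (Fin p) (Fin q) Rᵐᵒᵖ) : Matrix (Fin q) (Fin p) R :=
  (A.map MulOpposite.unop)ᵀ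

@[simp] theorem matTU_apply {p q : ℕ} (A : Matrix (Fin p) (Fin q) Rᵐᵒᵖ) (i j) :
    matTU A i j = (A j i).unop := rfl

theorem matTU_mul {p q r : ℕ} (A : Matrix (Fin p) (Fin q) Rᵐᵒᵖ)
    (B : Matrix (Fin q) (Fin r) Rᵐᵒᵖ) : matTU (A * B) = matTU B * matTU A := by
  ext i j
  simp [Matrix.mul_apply]

theorem matTU_one {p : ℕ} : matTU (1 : Matrix (Fin p) (Fin p) Rᵐᵒᵖ) = 1 := by
  ext i j
  rcases eq_or_ne i j with rfl | h
  · simp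
  · simp [Matrix.one_apply, h, Ne.symm h]

theorem matTU_homog {𝒜 : Γ → AddSubgroup R} {p q : ℕ} {A : Matrix (Fin p) (Fin q) Rᵐᵒᵖ}
    {α β} (h : HomogG (oppGr 𝒜) A α β) : HomogG 𝒜 (matTU A) β α := by
  intro i j
  have := h j i
  rw [mem_oppGr] at this
  simpa [_root_.mul_inv_rev] using this

theorem matTU_diagSum {p q p' q' : ℕ} (A : Matrix (Fin p) (Fin q) Rᵐᵒᵖ)
    (B : Matrix (Fin p') (Fin q') Rᵐᵒᵖ) :
    matTU (diagSum A B) = diagSum (matTU A) (matTU B) := by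
  ext i j
  simp only [matTU_apply, diagSum, Matrix.reindex_apply, Matrix.submatrix_apply]
  cases hi : finSumFinEquiv.symm i <;> cases hj : finSumFinEquiv.symm j <;>
    simp [hi, hj]

theorem matTU_upperBlockSum {p q p' q' : ℕ} (A : Matrix (Fin p) (Fin q) Rᵐᵒᵖ)
    (B : Matrix (Fin p') (Fin q') Rᵐᵒᵖ) (C : Matrix (Fin p) (Fin q') Rᵐᵒᵖ) :
    matTU (upperBlockSum A B C) =
      (Matrix.fromBlocks (matTU A) 0 (matTU C) (matTU B)).submatrix
        ⇑finSumFinEquiv.symm ⇑finSumFinEquiv.symm := by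
  ext i j
  simp only [matTU_apply, upperBlockSum, Matrix.reindex_apply, Matrix.submatrix_apply]
  cases hi : finSumFinEquiv.symm i <;> cases hj : finSumFinEquiv.symm j <;>
    simp [hi, hj]

/-- transport of a rank datum to the opposite ring -/
noncomputable def RkData.opp {𝒜 : Γ → AddSubgroup R} (d : RkData Γ R 𝒜) :
    RkData Γ Rᵐᵒᵖ (oppGr 𝒜) where
  rk A := d.rk (matTU A)
  hone := by
    rw [mem_oppGr]
    simpa using d.hone
  hmul := by
    intro γ δ x y hx hy
    rw [mem_oppGr] at hx hy ⊢
    rw [_root_.mul_inv_rev]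
    simpa using d.hmul hy hx
  hrk1 := by
    show d.rk (matTU (1 : Matrix (Fin 1) (Fin 1) Rᵐᵒᵖ)) = 1
    rw [matTU_one, d.rk_one]
  hrk2 := by
    intro m n k A B α β ε hA hB
    rw [matTU_mul]
    have := d.hrk2 (matTU B) (matTU A) ε β α (matTU_homog hB) (matTU_homog hA)
    omega
  hrk3 := by
    intro m n m' n' A B hA hB
    obtain ⟨α, β, hA⟩ := hA
    obtain ⟨α', β', hB⟩ := hB
    rw [matTU_diagSum]
    exact d.hrk3 _ _ ⟨_, _, matTU_homog hA⟩ ⟨_, _, matTU_homog hB⟩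
  hrk4 := by
    intro m n m' n' A B C α β δ ε hA hB hC
    rw [matTU_upperBlockSum]
    exact d.rk_lower_ge (matTU_homog hA) (matTU_homog hB) (matTU_homog hC)

theorem oppGr_homog {𝒜 : Γ → AddSubgroup R} {p q : ℕ} {A : Matrix (Fin p) (Fin q) R} {α β}
    (h : HomogG 𝒜 A α β) :
    HomogG (oppGr 𝒜) ((A.map MulOpposite.op)ᵀ) β α := by
  intro i j
  rw [mem_oppGr]
  simpa [_root_.mul_inv_rev] using h j i

theorem matTU_opT {p q : ℕ} (A : Matrix (Fin p) (Fin q) R) :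
    matTU ((A.map MulOpposite.op)ᵀ) = A := by
  ext i j
  simp

end Opp


/-- Let `R` be a `Γ`-graded ring and `rk` a gr-Sylvester matrix
rank function for `R` (an `ℕ`-valued function on rectangular homogeneous matrices
satisfying (MatRF1)–(MatRF4)).  Then
`𝒫 = {A ∈ 𝔐(R) : rk A < n, A of size n × n}` is a gr-prime matrix ideal. -/
theorem grSylvesterMatrixRank_gives_grPrimeMatrixIdeal
    {Γ : Type u} [Group Γ] [DecidableEq Γ] {R : Type v} [Ring R]
    (𝒜 : Γ → AddSubgroup R)
    (hinternal : DirectSum.IsInternal 𝒜)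
    (hone : (1 : R) ∈ 𝒜 1)
    (hmul : ∀ {γ δ : Γ} {x y : R}, x ∈ 𝒜 γ → y ∈ 𝒜 δ → x * y ∈ 𝒜 (γ * δ))
    (rk : ∀ {m n : ℕ}, Matrix (Fin m) (Fin n) R → ℕ)
    (hrk1 : rk (1 : Matrix (Fin 1) (Fin 1) R) = 1)
    (hrk2 : ∀ {m n k : ℕ} (A : Matrix (Fin m) (Fin n) R) (B : Matrix (Fin n) (Fin k) R)
        (α : Fin m → Γ) (β : Fin n → Γ) (ε : Fin k → Γ),
        IsHomog 𝒜 A α β → IsHomog 𝒜 B β ε → rk (A * B) ≤ min (rk A) (rk B))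
    (hrk3 : ∀ {m n m' n' : ℕ} (A : Matrix (Fin m) (Fin n) R)
        (B : Matrix (Fin m') (Fin n') R),
        IsHomogSq 𝒜 A → IsHomogSq 𝒜 B → rk (diagSum A B) = rk A + rk B)
    (hrk4 : ∀ {m n m' n' : ℕ} (A : Matrix (Fin m) (Fin n) R)
        (B : Matrix (Fin m') (Fin n') R) (C : Matrix (Fin m) (Fin n') R)
        (α : Fin m → Γ) (β : Fin n → Γ) (δ : Fin m' → Γ) (ε : Fin n' → Γ),
        IsHomog 𝒜 A α β → IsHomog 𝒜 B δ ε → IsHomog 𝒜 C α ε →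
        rk A + rk B ≤ rk (upperBlockSum A B C)) :
    IsGrPrimeMatrixIdeal 𝒜 {p : SqMat R | IsHomogSq 𝒜 p.2 ∧ rk p.2 < p.1} := by
  classical
  set d : RkData Γ R 𝒜 :=
    ⟨fun {m n} A => rk A, hone, fun hx hy => hmul hx hy, hrk1,
     fun A B α β ε h1 h2 => hrk2 A B α β ε h1 h2,
     fun A B h1 h2 => hrk3 A B h1 h2,
     fun A B C α β δ ε h1 h2 h3 => hrk4 A B C α β δ ε h1 h2 h3⟩ with hd
  constructor
  · rintro p ⟨h, _⟩
    exact h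
  · -- pm1
    intro n A hsq hnful
    rw [IsGrFull] at hnful
    push_neg at hnful
    obtain ⟨r, P, Q, α, lam, β, hP, hQ, hPQ, hrn⟩ := hnful
    refine ⟨hsq, ?_⟩
    have h1 : rk A ≤ rk P := by
      rw [hPQ]
      exact (hrk2 P Q α lam β hP hQ).trans (min_le_left _ _)
    have h2 : d.rk P ≤ r := d.rk_le_cols hP
    have h2' : rk P ≤ r := h2
    show rk A < n
    omega
  · -- pm2
    rintro n A B C ⟨hsqA, hrA⟩ ⟨hsqB, hrB⟩ ⟨⟨α, β, hhA, hhB⟩, hsum⟩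
    have hhC : IsHomog 𝒜 C α β := by
      intro i j
      rcases hsum with ⟨c, hAB, hC⟩ | ⟨r, hAB, hC⟩ <;>
        · rw [hC]
          split_ifs
          · exact (𝒜 _).add_mem (hhA i j) (hhB i j)
          · exact hhA i j
    refine ⟨⟨α, β, hhC⟩, ?_⟩
    rcases hsum with ⟨c, hAB, hC⟩ | ⟨r, hAB, hC⟩
    · exact d.detSumCol A B C α β hhA hhB c hAB hC hrA hrB
    · -- row case via the opposite ring
      have hrkopp : ∀ (M : Matrix (Fin n) (Fin n) R),
          d.opp.rk ((M.map MulOpposite.op)ᵀ) = d.rk M := by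
        intro M
        show d.rk (matTU ((M.map MulOpposite.op)ᵀ)) = d.rk M
        rw [matTU_opT]
      have h := d.opp.detSumCol ((A.map MulOpposite.op)ᵀ) ((B.map MulOpposite.op)ᵀ)
        ((C.map MulOpposite.op)ᵀ) β α (oppGr_homog hhA) (oppGr_homog hhB) r
        (fun i j hj => by
          show MulOpposite.op (A j i) = MulOpposite.op (B j i)
          rw [hAB j i hj])
        (fun i j => by
          show MulOpposite.op (C j i) = _
          rw [hC j i]
          split_ifs <;> simp)
        (by rw [hrkopp]; exact hrA)
        (by rw [hrkopp]; exact hrB)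
      rw [hrkopp] at h
      exact h
  · -- pm3
    rintro m n A B ⟨⟨α, β, hhA⟩, hrA⟩ ⟨α', β', hhB⟩
    have hhD : IsHomog 𝒜 (diagSum A B)
        (Sum.elim α α' ∘ ⇑finSumFinEquiv.symm) (Sum.elim β β' ∘ ⇑finSumFinEquiv.symm) := by
      rw [diagSum]
      exact HomogG.submatrix (HomogG.fromBlocks hhA HomogG.zero HomogG.zero hhB) _ _
    refine ⟨⟨_, _, hhD⟩, ?_⟩
    have heq : rk (diagSum A B) = rk A + rk B := hrk3 A B ⟨α, β, hhA⟩ ⟨α', β', hhB⟩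
    have hB' : d.rk B ≤ n := d.rk_le_cols hhB
    have hB'' : rk B ≤ n := hB'
    have hrA' : rk A < m := hrA
    show rk (diagSum A B) < m + n
    rw [heq]
    omega
  · -- pm4
    rintro m n A B ⟨α, β, hhA⟩ ⟨α', β', hhB⟩ ⟨_, hlt⟩
    have heq : rk (diagSum A B) = rk A + rk B := hrk3 A B ⟨α, β, hhA⟩ ⟨α', β', hhB⟩
    have hA' : d.rk A ≤ m := d.rk_le_cols hhA
    have hB' : d.rk B ≤ n := d.rk_le_cols hhB
    have hA'' : rk A ≤ m := hA'
    have hB'' : rk B ≤ n := hB'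
    have hlt' : rk (diagSum A B) < m + n := hlt
    rw [heq] at hlt'
    rcases lt_or_ge (rk A) m with h | h
    · exact Or.inl ⟨⟨α, β, hhA⟩, h⟩
    · refine Or.inr ⟨⟨α', β', hhB⟩, ?_⟩
      show rk B < n
      omega
  · -- pm5
    rintro ⟨_, h⟩
    have h' : rk (1 : Matrix (Fin 1) (Fin 1) R) < 1 := h
    rw [hrk1] at h'
    omega
  · -- pm6
    rintro n A e f ⟨⟨α, β, hhA⟩, hr⟩
    refine ⟨⟨α ∘ ⇑e, β ∘ ⇑f, HomogG.submatrix hhA ⇑e ⇑f⟩, ?_⟩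
    have heq : d.rk (A.submatrix ⇑e ⇑f) = d.rk A := d.rk_perm_eq hhA e f
    have heq' : rk (A.submatrix ⇑e ⇑f) = rk A := heq
    have hr' : rk A < n := hr
    show rk (A.submatrix ⇑e ⇑f) < n
    omega
end
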